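/- Let N_r ≥ 3 be an integer and let k be an integer with 4 ≤ k ≤ N_r + 1. Among all (2N_r)! bijections R from {1,2}×{1,…,N_r} to {1,…,2N_r}, the fraction of bijections for which V(R) = 2N_r − k + 1 (i.e., the ORS minimum SNR equals the k-th largest entry γ_k) equals 2·N_r·C(N_r, k−1) / ((2N_r − (k−1))·C(2N_r, k−1)). Equivalently, the fraction of bijections in which the k−1 largest ranks all lie in the same row and the k-th largest rank lies in the other row equals this quantity. -/

import Mathlib

def ORSvalue (Nr : ℕ) (R : (Fin 2 × Fin Nr) ≃ Fin (2 * Nr)) : ℕ :=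
  Finset.sup (Finset.univ.filter fun p : Fin Nr × Fin Nr => p.1 ≠ p.2)
    (fun p => min ((R (0, p.1)).val + 1) ((R (1, p.2)).val + 1))

namespace ORSaux

lemma fin2_cases : ∀ i : Fin 2, i = 0 ∨ i = 1 := by decide

def other (i : Fin 2) : Fin 2 := ⟨1 - i.val, by omega⟩

lemma other_ne : ∀ i : Fin 2, other i ≠ i := by decide

lemma ne_iff_eq_other : ∀ a i : Fin 2, (a ≠ i ↔ a = other i) := by decide

lemma fin2_ne : ∀ {a b : Fin 2}, a ≠ b → (a = 0 ∧ b = 1) ∨ (a = 1 ∧ b = 0) := by decide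

lemma pair_le_ORS {Nr : ℕ} (R : (Fin 2 × Fin Nr) ≃ Fin (2 * Nr)) (d e : Fin 2 × Fin Nr)
    (h1 : d.1 ≠ e.1) (h2 : d.2 ≠ e.2) :
    min ((R d).val + 1) ((R e).val + 1) ≤ ORSvalue Nr R := by
  unfold ORSvalue
  rcases fin2_ne h1 with ⟨hd, he⟩ | ⟨hd, he⟩
  · have hm : ((d.2, e.2) : Fin Nr × Fin Nr) ∈
        Finset.univ.filter (fun p : Fin Nr × Fin Nr => p.1 ≠ p.2) := by simp [h2]
    have := Finset.le_sup
      (f := fun p : Fin Nr × Fin Nr => min ((R (0, p.1)).val + 1) ((R (1, p.2)).val + 1)) hm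
    simpa [show ((0 : Fin 2), d.2) = d from Prod.ext_iff.mpr ⟨hd.symm, rfl⟩,
      show ((1 : Fin 2), e.2) = e from Prod.ext_iff.mpr ⟨he.symm, rfl⟩] using this
  · have hm : ((e.2, d.2) : Fin Nr × Fin Nr) ∈
        Finset.univ.filter (fun p : Fin Nr × Fin Nr => p.1 ≠ p.2) := by
      simp [Ne.symm h2]
    have := Finset.le_sup
      (f := fun p : Fin Nr × Fin Nr => min ((R (0, p.1)).val + 1) ((R (1, p.2)).val + 1)) hm
    rw [min_comm]
    simpa [show ((0 : Fin 2), e.2) = e from Prod.ext_iff.mpr ⟨he.symm, rfl⟩,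
      show ((1 : Fin 2), d.2) = d from Prod.ext_iff.mpr ⟨hd.symm, rfl⟩] using this

lemma ORS_le {Nr : ℕ} (R : (Fin 2 × Fin Nr) ≃ Fin (2 * Nr)) (b : ℕ)
    (hb : ∀ p : Fin Nr × Fin Nr, p.1 ≠ p.2 →
      min ((R (0, p.1)).val + 1) ((R (1, p.2)).val + 1) ≤ b) :
    ORSvalue Nr R ≤ b := by
  unfold ORSvalue
  refine Finset.sup_le ?_
  intro p hp
  exact hb p (by simpa using hp)

lemma sub_lt_two_mul {Nr k : ℕ} (hk4 : 4 ≤ k) (hk : k ≤ Nr + 1) : 2 * Nr - k < 2 * Nr := by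
  omega

lemma ORS_iff {Nr k : ℕ} (hNr : 3 ≤ Nr) (hk4 : 4 ≤ k) (hk : k ≤ Nr + 1)
    (R : (Fin 2 × Fin Nr) ≃ Fin (2 * Nr)) :
    ORSvalue Nr R = 2 * Nr - k + 1 ↔
      ∃ i : Fin 2, (∀ c : Fin 2 × Fin Nr, 2 * Nr - (k - 1) ≤ (R c).val → c.1 = i) ∧
        (R.symm ⟨2 * Nr - k, sub_lt_two_mul hk4 hk⟩).1 ≠ i := by
  constructor
  · intro h
    set c1 : Fin 2 × Fin Nr := R.symm ⟨2 * Nr - 1, by omega⟩ with hc1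
    set i : Fin 2 := c1.1 with hi
    have hval_c1 : (R c1).val = 2 * Nr - 1 := by rw [hc1, Equiv.apply_symm_apply]
    -- the top k-1 cells all lie in row i
    have hA : ∀ c : Fin 2 × Fin Nr, 2 * Nr - (k - 1) ≤ (R c).val → c.1 = i := by
      intro c hc
      by_contra hne
      have hvc : 2 * Nr - k + 1 ≤ (R c).val := by omega
      have hrow : c.1 = other i := (ne_iff_eq_other c.1 i).mp hne
      by_cases hcol : c.2 = c1.2
      · -- c and c1 share a column; find a third top cell d avoiding that column
        set c2 : Fin 2 × Fin Nr := R.symm ⟨2 * Nr - 2, by omega⟩ with hc2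
        set c3 : Fin 2 × Fin Nr := R.symm ⟨2 * Nr - 3, by omega⟩ with hc3
        have hval_c2 : (R c2).val = 2 * Nr - 2 := by rw [hc2, Equiv.apply_symm_apply]
        have hval_c3 : (R c3).val = 2 * Nr - 3 := by rw [hc3, Equiv.apply_symm_apply]
        have hc2c3 : c2 ≠ c3 := by
          intro e
          rw [e] at hval_c2
          omega
        set d : Fin 2 × Fin Nr := if c2 = c then c3 else c2 with hd
        have hdval : 2 * Nr - k + 1 ≤ (R d).val := by
          rw [hd]; split_ifs <;> omega
        have hd_ne_c : d ≠ c := by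
          rw [hd]; split_ifs with h' 
          · exact fun e => hc2c3 (h'.trans e.symm)
          · exact h'
        have hd_ne_c1 : d ≠ c1 := by
          intro e
          have hthis : (R d).val = 2 * Nr - 1 := by rw [e, hval_c1]
          rw [hd] at hthis
          split_ifs at hthis <;> omega
        have hdcol : d.2 ≠ c1.2 := by
          intro e
          by_cases hdi : d.1 = i
          · exact hd_ne_c1 (Prod.ext_iff.mpr ⟨hdi, e⟩)
          · have : d.1 = other i := (ne_iff_eq_other d.1 i).mp hdi
            exact hd_ne_c (Prod.ext_iff.mpr ⟨this.trans hrow.symm, e.trans hcol.symm⟩)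
        set x : Fin 2 × Fin Nr := if d.1 = i then c else c1 with hx
        have hx1 : d.1 ≠ x.1 := by
          rw [hx]; split_ifs with h'
          · rw [h', hrow]; exact fun e => other_ne i e.symm
          · exact h'
        have hx2 : d.2 ≠ x.2 := by
          rw [hx]; split_ifs with h'
          · rw [hcol]; exact hdcol
          · exact hdcol
        have hxval : 2 * Nr - k + 1 ≤ (R x).val := by
          rw [hx]; split_ifs <;> omega
        have hle := pair_le_ORS R d x hx1 hx2
        have hge : 2 * Nr - k + 2 ≤ min ((R d).val + 1) ((R x).val + 1) :=
          le_min (by omega) (by omega)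
        have := hge.trans hle
        omega
      · -- c and c1 are in different rows and different columns
        have hle := pair_le_ORS R c c1 (by rw [hrow]; exact other_ne i) hcol
        have hge : 2 * Nr - k + 2 ≤ min ((R c).val + 1) ((R c1).val + 1) :=
          le_min (by omega) (by omega)
        have := hge.trans hle
        omega
    refine ⟨i, hA, ?_⟩
    -- the k-th cell lies in the other row
    intro h0
    set c0 : Fin 2 × Fin Nr := R.symm ⟨2 * Nr - k, by omega⟩ with hc0
    have hub : ORSvalue Nr R ≤ 2 * Nr - k := by
      refine ORS_le R _ ?_
      intro p hp
      have key : ∀ y : Fin 2 × Fin Nr, y.1 ≠ i → (R y).val + 1 ≤ 2 * Nr - k := by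
        intro y hy
        by_contra hcon
        push_neg at hcon
        have hyv : 2 * Nr - k ≤ (R y).val := by omega
        rcases Nat.eq_or_lt_of_le hyv with heq | hlt
        · have : y = c0 := by
            rw [hc0]
            apply_fun R
            rw [Equiv.apply_symm_apply]
            exact Fin.ext heq.symm
          rw [this] at hy
          exact hy h0
        · exact hy (hA y (by omega))
      rcases fin2_cases i with hi0 | hi1
      · have := key (1, p.2) (by rw [hi0]; simp)
        exact le_trans (min_le_right _ _) this
      · have := key (0, p.1) (by rw [hi1]; simp)
        exact le_trans (min_le_left _ _) this
    omega
  · rintro ⟨i, hA, hB⟩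
    have hub : ORSvalue Nr R ≤ 2 * Nr - k + 1 := by
      refine ORS_le R _ ?_
      intro p hp
      by_contra hcon
      push_neg at hcon
      rw [lt_min_iff] at hcon
      have h0 : ((0 : Fin 2), p.1).1 = i := hA _ (by omega)
      have h1 : ((1 : Fin 2), p.2).1 = i := hA _ (by omega)
      have : (0 : Fin 2) = 1 := h0.trans h1.symm
      exact absurd this (by decide)
    have hlb : 2 * Nr - k + 1 ≤ ORSvalue Nr R := by
      set c0 : Fin 2 × Fin Nr := R.symm ⟨2 * Nr - k, by omega⟩ with hc0
      have hval_c0 : (R c0).val = 2 * Nr - k := by rw [hc0, Equiv.apply_symm_apply]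
      have h0 : c0.1 = other i := (ne_iff_eq_other _ i).mp hB
      set c1 : Fin 2 × Fin Nr := R.symm ⟨2 * Nr - 1, by omega⟩ with hc1
      set c2 : Fin 2 × Fin Nr := R.symm ⟨2 * Nr - 2, by omega⟩ with hc2
      have hval_c1 : (R c1).val = 2 * Nr - 1 := by rw [hc1, Equiv.apply_symm_apply]
      have hval_c2 : (R c2).val = 2 * Nr - 2 := by rw [hc2, Equiv.apply_symm_apply]
      have h1 : c1.1 = i := hA c1 (by omega)
      have h2 : c2.1 = i := hA c2 (by omega)
      have hcols : c1.2 ≠ c2.2 := by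
        intro e
        have : c1 = c2 := Prod.ext_iff.mpr ⟨h1.trans h2.symm, e⟩
        rw [this] at hval_c1
        omega
      set d : Fin 2 × Fin Nr := if c1.2 = c0.2 then c2 else c1 with hd
      have hd1 : d.1 = i := by rw [hd]; split_ifs <;> assumption
      have hd2 : d.2 ≠ c0.2 := by
        rw [hd]; split_ifs with h'
        · exact fun e => hcols (h'.trans e.symm)
        · exact h'
      have hdval : 2 * Nr - 2 ≤ (R d).val := by rw [hd]; split_ifs <;> omega
      have hle := pair_le_ORS R d c0 (by rw [hd1, h0]; exact fun e => other_ne i e.symm) hd2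
      refine le_trans (le_min (by omega) (by omega)) hle
    omega

lemma card_ext {α β : Type} [Fintype α] [Fintype β] [DecidableEq α] [DecidableEq β]
    (h : Fintype.card α = Fintype.card β) (s : Set α) (φ : ↥s ↪ β) :
    Nat.card {g : α ≃ β // ∀ v : ↥s, g v = φ v} =
      Nat.factorial (Fintype.card α - Nat.card ↥s) := by
  classical
  set t : Set β := Set.range (⇑φ) with ht
  set e0 : ↥s ≃ ↥t := Equiv.ofInjective _ φ.injective with he0
  have key : {g : α ≃ β // ∀ v : ↥s, g v = φ v} ≃ (↥(sᶜ) ≃ ↥(tᶜ)) := by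
    refine (Equiv.subtypeEquivRight ?_).trans (Equiv.Set.compl e0)
    intro g
    constructor <;> intro hg v <;> rw [hg v] <;> rfl
  rw [Nat.card_congr key]
  have hst : Fintype.card ↥t = Fintype.card ↥s := (Fintype.card_congr e0).symm
  have hcc : Fintype.card ↥(sᶜ) = Fintype.card ↥(tᶜ) := by
    rw [Fintype.card_compl_set, Fintype.card_compl_set, h, hst]
  rw [Nat.card_eq_fintype_card, Fintype.card_equiv (Fintype.equivOfCardEq hcc),
    Fintype.card_compl_set, Nat.card_eq_fintype_card]

lemma nat_card_sigma {ι : Type} [Fintype ι] (f : ι → Type) [∀ i, Finite (f i)] :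
    Nat.card (Σ i, f i) = ∑ i, Nat.card (f i) := by
  classical
  letI : ∀ i, Fintype (f i) := fun i => Fintype.ofFinite (f i)
  simp [Nat.card_eq_fintype_card]

/-- The set of the `k` largest values. -/
def Sset (Nr k : ℕ) : Set (Fin (2 * Nr)) := {v | 2 * Nr - k ≤ v.val}

instance (Nr k : ℕ) : DecidablePred (· ∈ Sset Nr k) := fun v =>
  inferInstanceAs (Decidable (2 * Nr - k ≤ v.val))

/-- Admissible partial assignments on the top `k` values. -/
abbrev Wt (Nr k : ℕ) (i : Fin 2) : Type :=
  {φ : ↥(Sset Nr k) → Fin 2 × Fin Nr // Function.Injective φ ∧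
    (∀ v : ↥(Sset Nr k), v.1.val ≠ 2 * Nr - k → (φ v).1 = i) ∧
    ∀ v : ↥(Sset Nr k), v.1.val = 2 * Nr - k → (φ v).1 = other i}

/-- The top `k - 1` values. -/
abbrev Et (Nr k : ℕ) : Type := {v : ↥(Sset Nr k) // v.1.val ≠ 2 * Nr - k}

lemma card_S {Nr k : ℕ} (h1 : k ≤ 2 * Nr) : Nat.card ↥(Sset Nr k) = k := by
  have e : ↥(Sset Nr k) ≃ Fin k :=
    { toFun := fun v => ⟨v.1.val - (2 * Nr - k), by
        have h2 := v.1.isLt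
        have h3 : 2 * Nr - k ≤ v.1.val := v.2
        omega⟩
      invFun := fun j => ⟨⟨j.val + (2 * Nr - k), by have := j.isLt; omega⟩,
        by exact Nat.le_add_left _ _⟩
      left_inv := fun v => by
        apply Subtype.ext
        apply Fin.ext
        have h3 : 2 * Nr - k ≤ v.1.val := v.2
        simp
        omega
      right_inv := fun j => by
        apply Fin.ext
        have := j.isLt
        simp }
  rw [Nat.card_congr e]
  simp

lemma card_E {Nr k : ℕ} (h0 : 1 ≤ k) (h1 : k ≤ 2 * Nr) : Nat.card (Et Nr k) = k - 1 := by
  have e : Et Nr k ≃ Fin (k - 1) :=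
    { toFun := fun u => ⟨u.1.1.val - (2 * Nr - k + 1), by
        have h2 := u.1.1.isLt
        have h3 : 2 * Nr - k ≤ u.1.1.val := u.1.2
        have h4 := u.2
        omega⟩
      invFun := fun j => ⟨⟨⟨j.val + (2 * Nr - k + 1), by have := j.isLt; omega⟩,
        by exact (by omega : 2 * Nr - k ≤ j.val + (2 * Nr - k + 1))⟩, by
        show j.val + (2 * Nr - k + 1) ≠ 2 * Nr - k
        omega⟩
      left_inv := fun u => by
        apply Subtype.ext
        apply Subtype.ext
        apply Fin.ext
        have h3 : 2 * Nr - k ≤ u.1.1.val := u.1.2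
        have h4 : u.1.1.val ≠ 2 * Nr - k := u.2
        simp
        omega
      right_inv := fun j => by
        apply Fin.ext
        have := j.isLt
        simp }
  rw [Nat.card_congr e]
  simp

lemma card_W {Nr k : ℕ} (hNr : 3 ≤ Nr) (hk4 : 4 ≤ k) (hk : k ≤ Nr + 1) (i : Fin 2) :
    Nat.card (Wt Nr k i) = Nr.descFactorial (k - 1) * Nr := by
  classical
  have hmS : (⟨2 * Nr - k, by omega⟩ : Fin (2 * Nr)) ∈ Sset Nr k := Nat.le_refl _
  have e : Wt Nr k i ≃ (Et Nr k ↪ Fin Nr) × Fin Nr :=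
    { toFun := fun φ =>
        (⟨fun u => (φ.1 u.1).2, by
          intro u u' hee
          have r1 : (φ.1 u.1).1 = i := φ.2.2.1 u.1 u.2
          have r2 : (φ.1 u'.1).1 = i := φ.2.2.1 u'.1 u'.2
          have : φ.1 u.1 = φ.1 u'.1 := Prod.ext_iff.mpr ⟨r1.trans r2.symm, hee⟩
          exact Subtype.ext (φ.2.1 this)⟩,
        (φ.1 ⟨⟨2 * Nr - k, by omega⟩, hmS⟩).2)
      invFun := fun p =>
        ⟨fun v => if h : v.1.val = 2 * Nr - k then (other i, p.2) else (i, p.1 ⟨v, h⟩), by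
          refine ⟨?_, ?_, ?_⟩
          · intro v v' hee
            by_cases h : v.1.val = 2 * Nr - k <;> by_cases h' : v'.1.val = 2 * Nr - k
            · exact Subtype.ext (Fin.ext (h.trans h'.symm))
            · simp only [dif_pos h, dif_neg h'] at hee
              exact absurd (Prod.ext_iff.mp hee).1 (other_ne i)
            · simp only [dif_neg h, dif_pos h'] at hee
              exact absurd (Prod.ext_iff.mp hee).1.symm (other_ne i)
            · simp only [dif_neg h, dif_neg h'] at hee
              have h2 := p.1.injective (Prod.ext_iff.mp hee).2
              exact congrArg Subtype.val h2
          · intro v h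
            simp only [dif_neg h]
          · intro v h
            simp only [dif_pos h]⟩
      left_inv := fun φ => by
        apply Subtype.ext
        funext v
        by_cases h : v.1.val = 2 * Nr - k
        · simp only [dif_pos h]
          have hv : v = ⟨⟨2 * Nr - k, by omega⟩, hmS⟩ := Subtype.ext (Fin.ext h)
          rw [hv]
          exact Prod.ext_iff.mpr ⟨(φ.2.2.2 _ rfl).symm, rfl⟩
        · simp only [dif_neg h]
          exact Prod.ext_iff.mpr ⟨(φ.2.2.1 v h).symm, rfl⟩
      right_inv := fun p => by
        refine Prod.ext_iff.mpr ⟨?_, ?_⟩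
        · ext u
          simp [u.2]
        · simp }
  rw [Nat.card_congr e, Nat.card_prod, Nat.card_eq_fintype_card,
    Fintype.card_embedding_eq]
  have hE : Fintype.card (Et Nr k) = k - 1 := by
    rw [← Nat.card_eq_fintype_card]
    exact card_E (by omega) (by omega)
  rw [hE]
  simp [Nat.card_eq_fintype_card]

lemma card_P {Nr k : ℕ} (hNr : 3 ≤ Nr) (hk4 : 4 ≤ k) (hk : k ≤ Nr + 1) (i : Fin 2) :
    Nat.card {g : Fin (2 * Nr) ≃ Fin 2 × Fin Nr //
        (∀ v : Fin (2 * Nr), 2 * Nr - (k - 1) ≤ v.val → (g v).1 = i) ∧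
        (g ⟨2 * Nr - k, sub_lt_two_mul hk4 hk⟩).1 ≠ i}
      = Nr.descFactorial (k - 1) * Nr * Nat.factorial (2 * Nr - k) := by
  classical
  have hmS : (⟨2 * Nr - k, by omega⟩ : Fin (2 * Nr)) ∈ Sset Nr k := Nat.le_refl _
  set T := {g : Fin (2 * Nr) ≃ Fin 2 × Fin Nr //
        (∀ v : Fin (2 * Nr), 2 * Nr - (k - 1) ≤ v.val → (g v).1 = i) ∧
        (g ⟨2 * Nr - k, by omega⟩).1 ≠ i} with hT
  set π : T → Wt Nr k i := fun x =>
    ⟨fun v => x.1 v.1, by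
      refine ⟨?_, ?_, ?_⟩
      · intro v v' hee
        exact Subtype.ext (x.1.injective hee)
      · intro v hv
        have h1 : 2 * Nr - k ≤ v.1.val := v.2
        exact x.2.1 v.1 (by omega)
      · intro v hv
        have hv1 : v.1 = ⟨2 * Nr - k, by omega⟩ := Fin.ext hv
        show (x.1 v.1).1 = other i
        rw [hv1]
        exact (ne_iff_eq_other _ i).mp x.2.2⟩ with hπ
  have step1 : Nat.card T = ∑ φ : Wt Nr k i, Nat.card {x : T // π x = φ} := by
    rw [Nat.card_congr (Equiv.sigmaFiberEquiv π).symm]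
    exact nat_card_sigma _
  have step2 : ∀ φ : Wt Nr k i, Nat.card {x : T // π x = φ}
      = Nat.factorial (2 * Nr - k) := by
    intro φ
    have e1 : {x : T // π x = φ} ≃
        {g : Fin (2 * Nr) ≃ Fin 2 × Fin Nr //
          ∀ v : ↥(Sset Nr k), g v = (⟨φ.1, φ.2.1⟩ : ↥(Sset Nr k) ↪ Fin 2 × Fin Nr) v} :=
      { toFun := fun x => ⟨x.1.1, fun v => congrFun (congrArg Subtype.val x.2) v⟩
        invFun := fun y => ⟨⟨y.1, by
          constructor
          · intro v hv
            have hvS : v ∈ Sset Nr k := (by omega : 2 * Nr - k ≤ v.val)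
            have hy := y.2 ⟨v, hvS⟩
            rw [hy]
            exact φ.2.2.1 ⟨v, hvS⟩ (by
              show v.val ≠ 2 * Nr - k
              omega)
          · have hy := y.2 ⟨⟨2 * Nr - k, by omega⟩, hmS⟩
            show (y.1 (⟨⟨2 * Nr - k, by omega⟩, hmS⟩ : ↥(Sset Nr k)).1).1 ≠ i
            rw [hy]
            have hro := φ.2.2.2 ⟨⟨2 * Nr - k, by omega⟩, hmS⟩ rfl
            show (φ.1 ⟨⟨2 * Nr - k, by omega⟩, hmS⟩).1 ≠ i
            rw [hro]
            exact other_ne i⟩, Subtype.ext (funext y.2)⟩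
        left_inv := fun x => Subtype.ext (Subtype.ext rfl)
        right_inv := fun y => Subtype.ext rfl }
    rw [Nat.card_congr e1]
    rw [card_ext (by simp) (Sset Nr k) ⟨φ.1, φ.2.1⟩]
    rw [card_S (by omega)]
    simp
  calc Nat.card T = ∑ φ : Wt Nr k i, Nat.card {x : T // π x = φ} := step1
    _ = ∑ _φ : Wt Nr k i, Nat.factorial (2 * Nr - k) := by
        exact Finset.sum_congr rfl (fun φ _ => step2 φ)
    _ = Nat.card (Wt Nr k i) * Nat.factorial (2 * Nr - k) := by
        rw [Finset.sum_const, Finset.card_univ, Nat.card_eq_fintype_card, smul_eq_mul]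
    _ = Nr.descFactorial (k - 1) * Nr * Nat.factorial (2 * Nr - k) := by
        rw [card_W hNr hk4 hk i]

lemma natid {Nr k : ℕ} (hNr : 3 ≤ Nr) (hk4 : 4 ≤ k) (hk : k ≤ Nr + 1) :
    2 * (Nr.descFactorial (k - 1) * Nr * Nat.factorial (2 * Nr - k)) *
      ((2 * Nr - (k - 1)) * (2 * Nr).choose (k - 1))
    = 2 * Nr * Nr.choose (k - 1) * Nat.factorial (2 * Nr) := by
  have e1 : Nr.descFactorial (k - 1) = Nat.factorial (k - 1) * Nr.choose (k - 1) :=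
    Nat.descFactorial_eq_factorial_mul_choose _ _
  have e2 : (2 * Nr).choose (k - 1) * Nat.factorial (k - 1) *
      Nat.factorial (2 * Nr - (k - 1)) = Nat.factorial (2 * Nr) :=
    Nat.choose_mul_factorial_mul_factorial (by omega)
  have e3 : 2 * Nr - (k - 1) = (2 * Nr - k) + 1 := by omega
  rw [e1, ← e2, e3, Nat.factorial_succ]
  ring

lemma final_real {Nr k : ℕ} (hNr : 3 ≤ Nr) (hk4 : 4 ≤ k) (hk : k ≤ Nr + 1) :
    ((2 * (Nr.descFactorial (k - 1) * Nr * Nat.factorial (2 * Nr - k)) : ℕ) : ℝ) /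
        (Nat.factorial (2 * Nr) : ℝ)
      = (2 * (Nr : ℝ) * (Nr.choose (k - 1) : ℝ)) /
        ((2 * (Nr : ℝ) - ((k : ℝ) - 1)) * (((2 * Nr).choose (k - 1) : ℝ))) := by
  have h1 : (1 : ℕ) ≤ k := by omega
  have h2 : k - 1 ≤ 2 * Nr := by omega
  have hsub : 2 * (Nr : ℝ) - ((k : ℝ) - 1) = ((2 * Nr - (k - 1) : ℕ) : ℝ) := by
    rw [Nat.cast_sub h2, Nat.cast_sub h1]
    push_cast
    ring
  rw [hsub]
  rw [div_eq_div_iff (by exact_mod_cast Nat.factorial_ne_zero (2 * Nr))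
    (mul_ne_zero (by exact_mod_cast (by omega : 2 * Nr - (k - 1) ≠ 0))
      (by
        have := Nat.choose_pos h2
        exact_mod_cast Nat.pos_iff_ne_zero.mp this))]
  exact_mod_cast natid hNr hk4 hk


def symmEquiv {α β : Type} : (α ≃ β) ≃ (β ≃ α) :=
  ⟨Equiv.symm, Equiv.symm, fun e => e.symm_symm, fun e => e.symm_symm⟩

lemma card_Q {Nr k : ℕ} (hNr : 3 ≤ Nr) (hk4 : 4 ≤ k) (hk : k ≤ Nr + 1) :
    Nat.card {R : (Fin 2 × Fin Nr) ≃ Fin (2 * Nr) //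
        ∃ i : Fin 2, (∀ c : Fin 2 × Fin Nr, 2 * Nr - (k - 1) ≤ (R c).val → c.1 = i) ∧
          (R.symm ⟨2 * Nr - k, sub_lt_two_mul hk4 hk⟩).1 ≠ i}
      = 2 * (Nr.descFactorial (k - 1) * Nr * Nat.factorial (2 * Nr - k)) := by
  classical
  have e1 : {R : (Fin 2 × Fin Nr) ≃ Fin (2 * Nr) //
        ∃ i : Fin 2, (∀ c : Fin 2 × Fin Nr, 2 * Nr - (k - 1) ≤ (R c).val → c.1 = i) ∧
          (R.symm ⟨2 * Nr - k, by omega⟩).1 ≠ i} ≃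
      {g : Fin (2 * Nr) ≃ Fin 2 × Fin Nr //
        ∃ i : Fin 2, (∀ v : Fin (2 * Nr), 2 * Nr - (k - 1) ≤ v.val → (g v).1 = i) ∧
          (g ⟨2 * Nr - k, by omega⟩).1 ≠ i} := by
    refine Equiv.subtypeEquiv symmEquiv ?_
    intro R
    simp only [symmEquiv, Equiv.coe_fn_mk]
    constructor
    · rintro ⟨i, hA, hB⟩
      refine ⟨i, ?_, hB⟩
      intro v hv
      exact hA (R.symm v) (by rwa [Equiv.apply_symm_apply])
    · rintro ⟨i, hA, hB⟩
      refine ⟨i, ?_, hB⟩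
      intro c hc
      have := hA (R c) hc
      rwa [Equiv.symm_apply_apply] at this
  rw [Nat.card_congr e1]
  have e2 : {g : Fin (2 * Nr) ≃ Fin 2 × Fin Nr //
        ∃ i : Fin 2, (∀ v : Fin (2 * Nr), 2 * Nr - (k - 1) ≤ v.val → (g v).1 = i) ∧
          (g ⟨2 * Nr - k, by omega⟩).1 ≠ i} ≃
      Σ i : Fin 2, {g : Fin (2 * Nr) ≃ Fin 2 × Fin Nr //
        (∀ v : Fin (2 * Nr), 2 * Nr - (k - 1) ≤ v.val → (g v).1 = i) ∧
          (g ⟨2 * Nr - k, by omega⟩).1 ≠ i} :=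
    { toFun := fun x => ⟨(x.1 ⟨2 * Nr - 1, by omega⟩).1, ⟨x.1, by
        obtain ⟨i, hi⟩ := x.2
        have htop : (x.1 ⟨2 * Nr - 1, by omega⟩).1 = i :=
          hi.1 _ (by show 2 * Nr - (k - 1) ≤ 2 * Nr - 1; omega)
        rw [htop]
        exact hi⟩⟩
      invFun := fun y => ⟨y.2.1, ⟨y.1, y.2.2⟩⟩
      left_inv := fun x => Subtype.ext rfl
      right_inv := fun y => by
        rcases y with ⟨i, g, hg⟩
        have htop : (g ⟨2 * Nr - 1, by omega⟩).1 = i :=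
          hg.1 _ (by show 2 * Nr - (k - 1) ≤ 2 * Nr - 1; omega)
        subst htop
        rfl }
  rw [Nat.card_congr e2, nat_card_sigma, Fin.sum_univ_two,
    card_P hNr hk4 hk 0, card_P hNr hk4 hk 1]
  omega

end ORSaux

/-- For `Nr ≥ 3` and `4 ≤ k ≤ Nr + 1`, among all `(2·Nr)!` bijections `R` from
`{1,2} × {1,…,Nr}` to `{1,…,2·Nr}`, the fraction with `V(R) = 2·Nr − k + 1` (ORS
minimum SNR equals the `k`-th largest entry) equals
`2·Nr·C(Nr, k−1) / ((2·Nr − (k−1))·C(2·Nr, k−1))`; equivalently, the fraction of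
bijections in which the `k − 1` largest ranks all lie in the same row and the
`k`-th largest rank lies in the other row equals this quantity. -/
theorem ORS_min_eq_kth_largest_fraction (Nr k : ℕ) (hNr : 3 ≤ Nr)
    (hk4 : 4 ≤ k) (hk : k ≤ Nr + 1) :
    (Nat.card {R : (Fin 2 × Fin Nr) ≃ Fin (2 * Nr) //
          ORSvalue Nr R = 2 * Nr - k + 1} : ℝ) / (Nat.factorial (2 * Nr) : ℝ)
      = (2 * (Nr : ℝ) * (Nr.choose (k - 1) : ℝ))
        / ((2 * (Nr : ℝ) - ((k : ℝ) - 1)) * (((2 * Nr).choose (k - 1) : ℝ)))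
    ∧ (Nat.card {R : (Fin 2 × Fin Nr) ≃ Fin (2 * Nr) //
          ∃ i : Fin 2,
            (∀ c : Fin 2 × Fin Nr, 2 * Nr - (k - 1) ≤ (R c).val → c.1 = i) ∧
            (R.symm ⟨2 * Nr - k, by omega⟩).1 ≠ i} : ℝ) / (Nat.factorial (2 * Nr) : ℝ)
      = (2 * (Nr : ℝ) * (Nr.choose (k - 1) : ℝ))
        / ((2 * (Nr : ℝ) - ((k : ℝ) - 1)) * (((2 * Nr).choose (k - 1) : ℝ))) := by
  have hQ := ORSaux.card_Q hNr hk4 hk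
  have key2 : (Nat.card {R : (Fin 2 × Fin Nr) ≃ Fin (2 * Nr) //
          ∃ i : Fin 2,
            (∀ c : Fin 2 × Fin Nr, 2 * Nr - (k - 1) ≤ (R c).val → c.1 = i) ∧
            (R.symm ⟨2 * Nr - k, by omega⟩).1 ≠ i} : ℝ) / (Nat.factorial (2 * Nr) : ℝ)
      = (2 * (Nr : ℝ) * (Nr.choose (k - 1) : ℝ))
        / ((2 * (Nr : ℝ) - ((k : ℝ) - 1)) * (((2 * Nr).choose (k - 1) : ℝ))) := by
    rw [hQ]
    exact ORSaux.final_real hNr hk4 hk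
  refine ⟨?_, key2⟩
  have hcongr : Nat.card {R : (Fin 2 × Fin Nr) ≃ Fin (2 * Nr) //
        ORSvalue Nr R = 2 * Nr - k + 1}
      = Nat.card {R : (Fin 2 × Fin Nr) ≃ Fin (2 * Nr) //
          ∃ i : Fin 2,
            (∀ c : Fin 2 × Fin Nr, 2 * Nr - (k - 1) ≤ (R c).val → c.1 = i) ∧
            (R.symm ⟨2 * Nr - k, by omega⟩).1 ≠ i} :=
    Nat.card_congr (Equiv.subtypeEquivRight (fun R => ORSaux.ORS_iff hNr hk4 hk R))
  rw [hcongr]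
  exact key2
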